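/- Let θ = (w_0,…,w_m) be a sequence of strings over a finite alphabet V with m ≥ 1, and let τ : V → V* satisfy w_{i+1} = τ(w_i[1])τ(w_i[2])⋯τ(w_i[|w_i|]) for every 0 ≤ i ≤ m−1. For 0 ≤ i ≤ m−1 and 1 ≤ j ≤ |w_i| define s_{i,j} = 1 + Σ_{j'=1}^{j−1} |τ(w_i[j'])| and e_{i,j} = s_{i,j} + |τ(w_i[j])|. Then each (i,j,s_{i,j},e_{i,j}) is a vertex of the characteristic graph G_θ, and the set I = {(i,j,s_{i,j},e_{i,j}) : 0 ≤ i ≤ m−1, 1 ≤ j ≤ |w_i|} is an independent set of G_θ of cardinality k = Σ_{i=0}^{m−1} |w_i|. -/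

import Mathlib

/-- `seg S s e` is the substring `S[s:e]`: from position `s` (inclusive, 1-indexed)
to position `e` (exclusive). -/
def seg {V : Type*} (S : List V) (s e : ℕ) : List V := (S.take (e - 1)).drop (s - 1)

/-- Vertices of the characteristic graph `G_θ` of `θ = (w 0, …, w m)`:
quadruples `(i, j, s, e)` with `0 ≤ i ≤ m-1`, `1 ≤ j ≤ |w i|`,
`1 ≤ s ≤ e ≤ |w (i+1)| + 1`, `s = 1` if `j = 1`, and `e = |w (i+1)| + 1` if `j = |w i|`. -/
def isVert {V : Type*} (w : ℕ → List V) (m : ℕ) : ℕ × ℕ × ℕ × ℕ → Prop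
  | (i, j, s, e) =>
    i < m ∧ 1 ≤ j ∧ j ≤ (w i).length ∧ 1 ≤ s ∧ s ≤ e ∧ e ≤ (w (i + 1)).length + 1 ∧
    (j = 1 → s = 1) ∧ (j = (w i).length → e = (w (i + 1)).length + 1)

/-- Adjacency in the characteristic graph `G_θ`. -/
def adj {V : Type*} (w : ℕ → List V) (m : ℕ) : ℕ × ℕ × ℕ × ℕ → ℕ × ℕ × ℕ × ℕ → Prop
  | (i₁, j₁, s₁, e₁), (i₂, j₂, s₂, e₂) =>
    isVert w m (i₁, j₁, s₁, e₁) ∧ isVert w m (i₂, j₂, s₂, e₂) ∧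
    (i₁, j₁, s₁, e₁) ≠ (i₂, j₂, s₂, e₂) ∧
    ((i₁ = i₂ ∧ j₁ = j₂) ∨
     ((w i₁)[j₁ - 1]? = (w i₂)[j₂ - 1]? ∧
       seg (w (i₁ + 1)) s₁ e₁ ≠ seg (w (i₂ + 1)) s₂ e₂) ∨
     (i₁ = i₂ ∧ j₂ = j₁ + 1 ∧ e₁ ≠ s₂) ∨
     (i₁ = i₂ ∧ j₁ = j₂ + 1 ∧ e₂ ≠ s₁))

/-- `I` is an independent set of the characteristic graph `G_θ`. -/
def IsIndepSet {V : Type*} (w : ℕ → List V) (m : ℕ) (I : Finset (ℕ × ℕ × ℕ × ℕ)) : Prop :=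
  (∀ v ∈ I, isVert w m v) ∧ ∀ u ∈ I, ∀ v ∈ I, ¬ adj w m u v

/-- Length of the flatten of a take-prefix. -/
lemma takeLen {V : Type*} (τ : V → List V) (l : List V) {j : ℕ} {a : V}
    (hj : 1 ≤ j) (ha : l[j - 1]? = some a) :
    ((l.take j).map τ).flatten.length
      = ((l.take (j - 1)).map τ).flatten.length + (τ a).length := by
  have hj' : j - 1 + 1 = j := Nat.succ_pred_eq_of_pos hj
  rw [← hj', List.take_succ, ha]
  simp

lemma flatten_take_le {V : Type*} (τ : V → List V) (l : List V) (k : ℕ) :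
    ((l.take k).map τ).flatten.length ≤ (l.map τ).flatten.length := by
  conv_rhs => rw [← List.take_append_drop k l]
  rw [List.map_append, List.flatten_append, List.length_append]
  exact Nat.le_add_right _ _

lemma seg_canon {V : Type*} (τ : V → List V) (l : List V) {j : ℕ} {a : V}
    (hj : 1 ≤ j) (ha : l[j - 1]? = some a) :
    seg ((l.map τ).flatten) (1 + ((l.take (j - 1)).map τ).flatten.length)
      (1 + ((l.take (j - 1)).map τ).flatten.length + (τ a).length) = τ a := by
  obtain ⟨hlt, hget⟩ := List.getElem?_eq_some_iff.mp ha
  have hdrop : l.drop (j - 1) = a :: l.drop j := by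
    have h' : j - 1 + 1 = j := by omega
    rw [List.drop_eq_getElem_cons hlt, hget, h']
  have hdecomp : (l.map τ).flatten
      = ((l.take (j - 1)).map τ).flatten ++ (τ a ++ ((l.drop j).map τ).flatten) := by
    conv_lhs => rw [← List.take_append_drop (j - 1) l, hdrop]
    simp
  unfold seg
  have h1 : 1 + ((l.take (j - 1)).map τ).flatten.length + (τ a).length - 1
      = ((l.take (j - 1)).map τ).flatten.length + (τ a).length := by omega
  have h2 : 1 + ((l.take (j - 1)).map τ).flatten.length - 1
      = ((l.take (j - 1)).map τ).flatten.length := by omega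
  rw [h1, h2, hdecomp, List.take_append, List.take_of_length_le (Nat.le_add_right _ _),
    Nat.add_sub_cancel_left, List.take_left, List.drop_left]

theorem canonical_indepSet_of_compatible {V : Type*} [Fintype V]
    (m : ℕ) (hm : 1 ≤ m) (w : ℕ → List V)
    (τ : V → List V) (hτ : ∀ i < m, w (i + 1) = ((w i).map τ).flatten)
    (s e : ℕ → ℕ → ℕ)
    (hs : ∀ i j, s i j = 1 + (((w i).take (j - 1)).map τ).flatten.length)
    (he : ∀ i j a, (w i)[j - 1]? = some a → e i j = s i j + (τ a).length)
    (I : Finset (ℕ × ℕ × ℕ × ℕ))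
    (hI : I = (Finset.range m).biUnion fun i =>
      (Finset.Icc 1 (w i).length).image fun j => (i, j, s i j, e i j)) :
    (∀ i < m, ∀ j, 1 ≤ j → j ≤ (w i).length → isVert w m (i, j, s i j, e i j)) ∧
    IsIndepSet w m I ∧ I.card = ∑ i ∈ Finset.range m, (w i).length := by
  -- e expressed via take j
  have hE : ∀ i j, 1 ≤ j → j ≤ (w i).length →
      e i j = 1 + (((w i).take j).map τ).flatten.length := by
    intro i j hj1 hj2
    have hlt : j - 1 < (w i).length := by omega
    have ha : (w i)[j - 1]? = some ((w i)[j - 1]) := List.getElem?_eq_getElem hlt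
    rw [he i j _ ha, hs i j, takeLen τ (w i) hj1 ha, Nat.add_assoc]
  have key : ∀ i < m, ∀ j, 1 ≤ j → j ≤ (w i).length → isVert w m (i, j, s i j, e i j) := by
    intro i hi j hj1 hj2
    have hlt : j - 1 < (w i).length := by omega
    have ha : (w i)[j - 1]? = some ((w i)[j - 1]) := List.getElem?_eq_getElem hlt
    have hsq := hs i j
    have heq := he i j _ ha
    have hstep := hE i j hj1 hj2
    have hLen : (w (i + 1)).length = ((w i).map τ).flatten.length := by rw [hτ i hi]
    have hle := flatten_take_le τ (w i) j
    refine ⟨hi, hj1, hj2, by omega, by omega, by omega, ?_, ?_⟩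
    · intro h
      rw [hsq, h]
      simp
    · intro h
      rw [hstep, h, List.take_length, hLen]
      omega
  have hmem : ∀ v ∈ I, ∃ i, i < m ∧ ∃ j, 1 ≤ j ∧ j ≤ (w i).length ∧
      v = (i, j, s i j, e i j) := by
    intro v hv
    rw [hI] at hv
    simp only [Finset.mem_biUnion, Finset.mem_range, Finset.mem_image, Finset.mem_Icc] at hv
    obtain ⟨i, hi, j, ⟨hj1, hj2⟩, hvv⟩ := hv
    exact ⟨i, hi, j, hj1, hj2, hvv.symm⟩
  refine ⟨key, ⟨?_, ?_⟩, ?_⟩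
  · intro v hv
    obtain ⟨i, hi, j, hj1, hj2, rfl⟩ := hmem v hv
    exact key i hi j hj1 hj2
  · intro u hu v hv hadj
    obtain ⟨i₁, hi₁, j₁, hj₁1, hj₁2, rfl⟩ := hmem u hu
    obtain ⟨i₂, hi₂, j₂, hj₂1, hj₂2, rfl⟩ := hmem v hv
    obtain ⟨-, -, hne, hcase⟩ := hadj
    have hlt₁ : j₁ - 1 < (w i₁).length := by omega
    have hlt₂ : j₂ - 1 < (w i₂).length := by omega
    have ha₁ : (w i₁)[j₁ - 1]? = some ((w i₁)[j₁ - 1]) := List.getElem?_eq_getElem hlt₁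
    have ha₂ : (w i₂)[j₂ - 1]? = some ((w i₂)[j₂ - 1]) := List.getElem?_eq_getElem hlt₂
    rcases hcase with ⟨h1, h2⟩ | ⟨hlet, hsegs⟩ | ⟨h1, h2, h3⟩ | ⟨h1, h2, h3⟩
    · subst h1; subst h2; exact hne rfl
    · have hseg₁ : seg (w (i₁ + 1)) (s i₁ j₁) (e i₁ j₁) = τ ((w i₁)[j₁ - 1]) := by
        rw [hτ i₁ hi₁, he i₁ j₁ _ ha₁, hs i₁ j₁]
        exact seg_canon τ (w i₁) hj₁1 ha₁
      have hseg₂ : seg (w (i₂ + 1)) (s i₂ j₂) (e i₂ j₂) = τ ((w i₂)[j₂ - 1]) := by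
        rw [hτ i₂ hi₂, he i₂ j₂ _ ha₂, hs i₂ j₂]
        exact seg_canon τ (w i₂) hj₂1 ha₂
      have : (w i₁)[j₁ - 1] = (w i₂)[j₂ - 1] := by
        rw [ha₁, ha₂] at hlet
        exact Option.some.inj hlet
      exact hsegs (by rw [hseg₁, hseg₂, this])
    · apply h3
      subst h1
      rw [hE i₁ j₁ hj₁1 hj₁2, hs i₁ j₂, h2]
      simp
    · apply h3
      subst h1
      rw [hE i₁ j₂ hj₂1 hj₂2, hs i₁ j₁, h2]
      simp
  · rw [hI, Finset.card_biUnion]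
    · refine Finset.sum_congr rfl fun i _ => ?_
      rw [Finset.card_image_of_injective _ (fun a b h => by
        simpa using congrArg (fun p : ℕ × ℕ × ℕ × ℕ => p.2.1) h)]
      simp
    · intro i _ i' _ hii'
      rw [Function.onFun, Finset.disjoint_left]
      intro x hx hx'
      simp only [Finset.mem_image, Finset.mem_Icc] at hx hx'
      obtain ⟨j, -, rfl⟩ := hx
      obtain ⟨j', -, hx'⟩ := hx'
      exact hii' (congrArg (fun p : ℕ × ℕ × ℕ × ℕ => p.1) hx').symm
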